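/- Fix β₀ ∈ (0, π/12], R₀ ≥ 1, γ > 0 and constants 0 < c_V ≤ C_V. Let 𝒮 = {z ∈ ℂ : |z| ≥ R₀, Re z > 0, |arg z| ≤ 3β₀}, and let g be holomorphic on an open set containing 𝒮 with |g(z)| ≤ C_V |z|^{−γ} for all z ∈ 𝒮; assume moreover that g is real-valued on [R₀, ∞) with g(r) ≥ c_V r^{−γ} for all real r ≥ R₀. Then there exist β₁ ∈ (0, β₀] and a constant C, both depending only on β₀, γ, c_V, C_V, such that for all r₀ ≥ 2R₀, all r ≥ r₀ and all β ∈ [0, β₁], writing r_β = r₀ + (r − r₀)e^{iβ}: |g(r_β) − g(r)| ≤ C β g(r). -/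

import Mathlib

open Real Set

/-- The sector `{z ∈ ℂ : |z| ≥ R₀, Re z > 0, |arg z| ≤ 3β₀}`. -/
def sector (R₀ β₀ : ℝ) : Set ℂ :=
  {z : ℂ | R₀ ≤ ‖z‖ ∧ 0 < z.re ∧ |Complex.arg z| ≤ 3 * β₀}

lemma sin_bound {s : ℝ} (hs : 0 < s) (hs' : s ≤ 27/100) :
    (3/2) * s ≤ (3*s - 4*s^3) * (1 - s/2) := by nlinarith [sq_nonneg s, pow_pos hs 3]

lemma mem_sector_of_near {β₀ R₀ : ℝ} (hβ0 : 0 < β₀) (hβπ : β₀ ≤ π/12) (hR : 1 ≤ R₀)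
    {z w : ℂ} (hza : 2*R₀ ≤ ‖z‖) (hzre : ‖z‖ ≤ 2 * z.re)
    (hzim0 : 0 ≤ z.im) (hzim : z.im ≤ Real.sin β₀ * ‖z‖)
    (hw : ‖w - z‖ ≤ (Real.sin β₀/2) * ‖z‖) :
    w ∈ sector R₀ β₀ := by
  set s := Real.sin β₀ with hs_def
  have hs : 0 < s := Real.sin_pos_of_pos_of_lt_pi hβ0 (by linarith [Real.pi_gt_three])
  have hπ : π < 3.15 := Real.pi_lt_d2
  have hs' : s ≤ 27/100 := by
    have h := Real.sin_lt hβ0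
    linarith [hs_def ▸ h]
  have ha : (0:ℝ) < ‖z‖ := by nlinarith
  have hcube : 4*s^3 ≤ 2*s := by nlinarith [sq_nonneg s]
  have hpos3 : 0 < 3*s - 4*s^3 := by linarith
  have habs_sub : ‖z‖ - ‖w‖ ≤ ‖w - z‖ := by
    have h1 := norm_sub_norm_le z w
    rw [norm_sub_rev z w] at h1
    simpa using h1
  have hwabs : (1 - s/2) * ‖z‖ ≤ ‖w‖ := by nlinarith
  have hwa0 : (0:ℝ) < ‖w‖ := by nlinarith
  have hre_sub' : z.re - w.re ≤ ‖w - z‖ := by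
    have h1 : z.re - w.re ≤ |(w - z).re| := by
      rw [Complex.sub_re]
      linarith [neg_abs_le (w.re - z.re), neg_le_abs (w.re - z.re)]
    linarith [Complex.abs_re_le_norm (w - z)]
  have hwre : 0 < w.re := by nlinarith
  refine ⟨by nlinarith, hwre, ?_⟩
  have h3β : 3 * β₀ ≤ π/2 := by linarith
  have h3β0 : 0 < 3 * β₀ := by linarith
  have hsin3 : Real.sin (3 * β₀) = 3*s - 4*s^3 := by
    rw [Real.sin_three_mul]
  have himw : |w.im| ≤ Real.sin (3*β₀) * ‖w‖ := by
    have h1 : |w.im| ≤ z.im + ‖w - z‖ := by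
      have he : w.im = z.im + (w - z).im := by simp
      rw [he]
      calc |z.im + (w-z).im| ≤ |z.im| + |(w-z).im| := abs_add_le _ _
        _ ≤ z.im + ‖w - z‖ := by
            rw [abs_of_nonneg hzim0]; linarith [Complex.abs_im_le_norm (w - z)]
    have h2 : z.im + ‖w - z‖ ≤ (3/2) * s * ‖z‖ := by nlinarith
    have h3 : (3/2) * s * ‖z‖ ≤ ((3*s - 4*s^3) * (1 - s/2)) * ‖z‖ :=
      mul_le_mul_of_nonneg_right (sin_bound hs hs') ha.le
    have h4 : (3*s - 4*s^3) * ((1 - s/2) * ‖z‖) ≤ (3*s-4*s^3) * ‖w‖ :=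
      mul_le_mul_of_nonneg_left hwabs hpos3.le
    rw [hsin3]
    nlinarith
  rw [Complex.arg_of_re_nonneg hwre.le, abs_le]
  have htle : w.im / ‖w‖ ≤ Real.sin (3*β₀) := by
    rw [div_le_iff₀ hwa0]
    linarith [le_abs_self w.im]
  have htge : -Real.sin (3*β₀) ≤ w.im / ‖w‖ := by
    rw [le_div_iff₀ hwa0]
    linarith [neg_abs_le w.im]
  constructor
  · calc -(3*β₀) = Real.arcsin (Real.sin (-(3*β₀))) :=
          (Real.arcsin_sin (by linarith) (by linarith)).symm
      _ ≤ _ := Real.monotone_arcsin (by rw [Real.sin_neg]; exact htge)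
  · calc Real.arcsin (w.im / ‖w‖) ≤ Real.arcsin (Real.sin (3*β₀)) :=
          Real.monotone_arcsin htle
      _ = 3*β₀ := Real.arcsin_sin (by linarith) (by linarith)

set_option maxHeartbeats 1000000 in
/-- Uniform first-order expansion of the exterior-scaled potential: if `g` is holomorphic
on an open set containing the sector `sector R₀ β₀`, bounded by `C_V |z|^{-γ}` there,
real-valued on `[R₀, ∞)` with `g(r) ≥ c_V r^{-γ}`, then there are `β₁ ∈ (0, β₀]` and `C`
depending only on `β₀, γ, c_V, C_V` such that for `r₀ ≥ 2R₀`, `r ≥ r₀`, `β ∈ [0, β₁]`,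
writing `r_β = r₀ + (r - r₀)e^{iβ}`: `|g(r_β) - g(r)| ≤ C β g(r)`. -/
theorem first_order_expansion_exterior_scaling (β₀ γ c_V C_V : ℝ)
    (hβ : β₀ ∈ Set.Ioc 0 (π / 12)) (hγ : 0 < γ) (hc : 0 < c_V) (hcC : c_V ≤ C_V) :
    ∃ β₁ : ℝ, β₁ ∈ Set.Ioc 0 β₀ ∧ ∃ C : ℝ, 0 < C ∧ ∀ R₀ : ℝ, 1 ≤ R₀ →
      ∀ (g : ℂ → ℂ) (U : Set ℂ), IsOpen U → sector R₀ β₀ ⊆ U → DifferentiableOn ℂ g U →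
      (∀ z ∈ sector R₀ β₀, ‖g z‖ ≤ C_V * ‖z‖ ^ (-γ)) →
      (∀ r : ℝ, R₀ ≤ r → (g (r : ℂ)).im = 0 ∧ c_V * r ^ (-γ) ≤ (g (r : ℂ)).re) →
      ∀ r₀ : ℝ, 2 * R₀ ≤ r₀ → ∀ r : ℝ, r₀ ≤ r → ∀ β : ℝ, β ∈ Set.Icc 0 β₁ →
        ‖g ((r₀ : ℂ) + ((r : ℂ) - (r₀ : ℂ)) * Complex.exp (Complex.I * (β : ℂ)))
            - g (r : ℂ)‖
          ≤ C * β * (g (r : ℂ)).re := by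
  obtain ⟨hβ0, hβπ⟩ := hβ
  have hπ : π < 3.15 := Real.pi_lt_d2
  set s := Real.sin β₀ with hs_def
  clear_value s
  have hs : 0 < s := by
    rw [hs_def]; exact Real.sin_pos_of_pos_of_lt_pi hβ0 (by linarith [Real.pi_gt_three])
  have hs' : s ≤ 27/100 := by
    have h := Real.sin_lt hβ0
    linarith [hs_def ▸ h]
  set δ : ℝ := s/2 with hδ_def
  clear_value δ
  have hδ : 0 < δ := by rw [hδ_def]; positivity
  have hδ' : δ ≤ 27/200 := by rw [hδ_def]; linarith
  have hKpos : (0:ℝ) < ((1 - δ)/2) ^ (-γ) := Real.rpow_pos_of_pos (by linarith) _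
  refine ⟨β₀, ⟨hβ0, le_refl _⟩, C_V * ((1 - δ)/2) ^ (-γ) / (δ * c_V),
    by have hCV : 0 < C_V := lt_of_lt_of_le hc hcC; positivity, ?_⟩
  intro R₀ hR g U hU hsub hgd hbd hreal r₀ hr₀ r hr β hβmem
  obtain ⟨hβ0', hββ₀⟩ := hβmem
  have hr₀2 : 2 ≤ r₀ := by linarith
  have hr2 : 2 ≤ r := by linarith
  have hrpos : (0:ℝ) < r := by linarith
  set φ : ℝ → ℂ := fun θ => (r₀ : ℂ) + ((r : ℂ) - (r₀ : ℂ)) * Complex.exp (Complex.I * θ)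
    with hφ_def
  clear_value φ
  -- pointwise facts
  have key : ∀ θ ∈ Icc (0:ℝ) β,
      Metric.closedBall (φ θ) (δ * ‖φ θ‖) ⊆ sector R₀ β₀ ∧
      r/2 ≤ ‖φ θ‖ ∧ r - r₀ ≤ ‖φ θ‖ := by
    intro θ ⟨hθ0, hθβ⟩
    have hθβ₀ : θ ≤ β₀ := le_trans hθβ hββ₀
    have hexp : Complex.exp (Complex.I * (θ:ℂ)) = (Real.cos θ : ℂ) + (Real.sin θ : ℂ) * Complex.I := by
      rw [mul_comm, Complex.exp_mul_I, Complex.ofReal_cos, Complex.ofReal_sin]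
    have hφθ : φ θ = ((r₀ + (r - r₀) * Real.cos θ : ℝ) : ℂ)
        + ((r - r₀) * Real.sin θ : ℝ) * Complex.I := by
      simp only [hφ_def]; rw [hexp]; push_cast; ring
    have hre : (φ θ).re = r₀ + (r - r₀) * Real.cos θ := by
      rw [hφθ]
      simp only [Complex.add_re, Complex.mul_re, Complex.I_re, Complex.I_im,
        Complex.ofReal_re, Complex.ofReal_im]
      ring
    have him : (φ θ).im = (r - r₀) * Real.sin θ := by
      rw [hφθ]
      simp only [Complex.add_im, Complex.mul_im, Complex.I_re, Complex.I_im,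
        Complex.ofReal_re, Complex.ofReal_im]
      ring
    have hcos : 1/2 ≤ Real.cos θ := by
      have h := Real.cos_le_cos_of_nonneg_of_le_pi hθ0 (by linarith) (by linarith : θ ≤ π/3)
      rw [Real.cos_pi_div_three] at h; exact h
    have hcos1 : Real.cos θ ≤ 1 := Real.cos_le_one θ
    have hsin0 : 0 ≤ Real.sin θ := Real.sin_nonneg_of_nonneg_of_le_pi hθ0 (by linarith)
    have hsins : Real.sin θ ≤ s := by
      rw [hs_def]
      exact Real.sin_le_sin_of_le_of_le_pi_div_two (by linarith) (by linarith) hθβ₀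
    have hφθ' : φ θ = (r₀ : ℂ) + ((r:ℂ) - r₀) * Complex.exp (Complex.I * θ) := by
      rw [hφ_def]
    have ha_le : ‖φ θ‖ ≤ r := by
      have he1 : ‖Complex.exp (Complex.I * (θ:ℂ))‖ = 1 := by
        rw [Complex.norm_exp]; simp
      rw [hφθ']
      calc ‖(r₀:ℂ) + ((r:ℂ) - r₀) * Complex.exp (Complex.I * θ)‖
            ≤ ‖(r₀:ℂ)‖
            + ‖((r:ℂ) - r₀) * Complex.exp (Complex.I * θ)‖ := norm_add_le _ _
        _ = r₀ + (r - r₀) := by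
            rw [norm_mul, he1, mul_one, ← Complex.ofReal_sub, Complex.norm_real,
              Complex.norm_real, Real.norm_eq_abs, Real.norm_eq_abs, abs_of_nonneg (by linarith : (0:ℝ) ≤ r₀),
              abs_of_nonneg (by linarith : (0:ℝ) ≤ r - r₀)]
        _ = r := by ring
    have hre_ge : r/2 ≤ (φ θ).re := by
      rw [hre]
      have hmul : (r - r₀) * (1/2) ≤ (r - r₀) * Real.cos θ :=
        mul_le_mul_of_nonneg_left hcos (by linarith)
      linarith
    have hre_le_abs : (φ θ).re ≤ ‖φ θ‖ := Complex.re_le_norm _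
    have ha2 : ‖φ θ‖ ≤ 2 * (φ θ).re := by linarith [ha_le, hre_ge]
    have hapos : 0 < ‖φ θ‖ := by linarith
    have hsq : (‖φ θ‖)^2 = (φ θ).re^2 + (φ θ).im^2 := by
      rw [Complex.sq_norm, Complex.normSq_apply]; ring
    have hsubr : r - r₀ ≤ ‖φ θ‖ := by
      have h1 : (r - r₀)^2 ≤ (‖φ θ‖)^2 := by
        rw [hsq, hre, him]; nlinarith [Real.sin_sq_add_cos_sq θ]
      have h2 := Real.sqrt_le_sqrt h1
      rwa [Real.sqrt_sq (by linarith : (0:ℝ) ≤ r - r₀), Real.sqrt_sq hapos.le] at h2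
    have hzim_le : (φ θ).im ≤ s * ‖φ θ‖ := by
      rw [him]
      calc (r - r₀) * Real.sin θ ≤ (r - r₀) * s :=
            mul_le_mul_of_nonneg_left hsins (by linarith)
        _ ≤ ‖φ θ‖ * s := mul_le_mul_of_nonneg_right hsubr hs.le
        _ = s * ‖φ θ‖ := by ring
    have hza : 2 * R₀ ≤ ‖φ θ‖ := by
      have h0 : r₀ ≤ (φ θ).re := by
        rw [hre]
        have hmul : 0 ≤ (r - r₀) * Real.cos θ := mul_nonneg (by linarith) (by linarith)
        linarith
      linarith
    have him0 : 0 ≤ (φ θ).im := by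
      rw [him]; exact mul_nonneg (by linarith) hsin0
    refine ⟨?_, by linarith, hsubr⟩
    intro w hw
    rw [Metric.mem_closedBall, dist_eq_norm] at hw
    have hδs : δ = Real.sin β₀ / 2 := by rw [hδ_def, hs_def]
    refine mem_sector_of_near hβ0 hβπ hR hza ha2 him0 (hs_def ▸ hzim_le) ?_
    rw [← hδs]
    simpa using hw
  -- derivative bound
  set M : ℝ := (C_V / δ) * ((1 - δ)/2) ^ (-γ) * r ^ (-γ) with hM_def
  clear_value M
  have hderiv_bound : ∀ θ ∈ Icc (0:ℝ) β,
      ‖deriv g (φ θ)‖ * (r - r₀) ≤ M := by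
    intro θ hθ
    obtain ⟨hball, hage, hsubr⟩ := key θ hθ
    set z := φ θ with hz_def
    clear_value z
    set a := ‖z‖ with ha_def
    clear_value a
    have hapos : 0 < a := by linarith
    have hRpos : 0 < δ * a := by positivity
    have hdiff : DifferentiableOn ℂ g (Metric.closedBall z (δ * a)) :=
      hgd.mono (fun x hx => hsub (hball hx))
    have hdc : DiffContOnCl ℂ g (Metric.ball z (δ * a)) := by
      have h2 := hdiff
      rw [← closure_ball z hRpos.ne'] at h2
      exact h2.diffContOnCl
    have hsphere : ∀ w ∈ Metric.sphere z (δ * a), ‖g w‖ ≤ C_V * ((1 - δ) * a) ^ (-γ) := by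
      intro w hw
      have hwball : w ∈ Metric.closedBall z (δ * a) := Metric.sphere_subset_closedBall hw
      have hwsec : w ∈ sector R₀ β₀ := hball hwball
      have hwabs : (1 - δ) * a ≤ ‖w‖ := by
        have h1 : ‖z‖ - ‖w‖ ≤ ‖w - z‖ := by
          have h1 := norm_sub_norm_le z w
          rw [norm_sub_rev z w] at h1
          simpa using h1
        have h2 : ‖w - z‖ ≤ δ * a := by
          rw [Metric.mem_sphere, dist_eq_norm] at hw
          simpa using hw.le
        linarith
      calc ‖g w‖ = ‖g w‖ := rfl
        _ ≤ C_V * ‖w‖ ^ (-γ) := hbd w hwsec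
        _ ≤ C_V * ((1 - δ) * a) ^ (-γ) := by
            have h3 := Real.rpow_le_rpow_of_nonpos
              (mul_pos (by linarith : (0:ℝ) < 1 - δ) hapos) hwabs (by linarith : -γ ≤ 0)
            exact mul_le_mul_of_nonneg_left h3 (by linarith)
    have hd := Complex.norm_deriv_le_of_forall_mem_sphere_norm_le hRpos hdc hsphere
    -- ‖deriv g z‖ ≤ C_V * ((1-δ)*a)^(-γ) / (δ*a)
    have hstep : C_V * ((1 - δ) * a) ^ (-γ) / (δ * a) * (r - r₀) ≤ M := by
      have hKa : ((1 - δ) * a) ^ (-γ) ≤ ((1 - δ)/2) ^ (-γ) * r ^ (-γ) := by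
        have h1 : ((1-δ)/2) * r ≤ (1 - δ) * a := by
          have := mul_le_mul_of_nonneg_left hage (by linarith : (0:ℝ) ≤ 1-δ)
          linarith
        have h2 := Real.rpow_le_rpow_of_nonpos (mul_pos (by linarith : (0:ℝ) < (1-δ)/2) hrpos) h1 (by linarith : -γ ≤ 0)
        rwa [Real.mul_rpow (by linarith) hrpos.le] at h2
      have hfrac : (r - r₀) / (δ * a) ≤ 1 / δ := by
        rw [div_le_div_iff₀ hRpos hδ]
        have := mul_le_mul_of_nonneg_left hsubr hδ.le
        linarith
      have hCV : 0 < C_V := lt_of_lt_of_le hc hcC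
      have hrγ : 0 < r ^ (-γ) := Real.rpow_pos_of_pos hrpos _
      have e1 : C_V * ((1 - δ) * a) ^ (-γ) / (δ * a) * (r - r₀)
          = C_V * (((1 - δ) * a) ^ (-γ) * ((r - r₀) / (δ * a))) := by ring
      rw [e1, hM_def]
      have h3 : ((1 - δ) * a) ^ (-γ) * ((r - r₀) / (δ * a)) ≤ (((1-δ)/2)^(-γ) * r^(-γ)) * (1/δ) := by
        have hp1 : 0 < ((1 - δ) * a) ^ (-γ) := Real.rpow_pos_of_pos (mul_pos (by linarith) hapos) _
        have hp2 : 0 ≤ (r - r₀) / (δ * a) := div_nonneg (by linarith) hRpos.le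
        exact mul_le_mul hKa hfrac hp2 (by positivity)
      calc C_V * (((1 - δ) * a) ^ (-γ) * ((r - r₀) / (δ * a)))
          ≤ C_V * ((((1-δ)/2)^(-γ) * r^(-γ)) * (1/δ)) :=
            mul_le_mul_of_nonneg_left h3 hCV.le
        _ = C_V / δ * ((1-δ)/2)^(-γ) * r^(-γ) := by ring
    calc ‖deriv g z‖ * (r - r₀) ≤ (C_V * ((1 - δ) * a) ^ (-γ) / (δ * a)) * (r - r₀) := by
          have : 0 ≤ r - r₀ := by linarith
          exact mul_le_mul_of_nonneg_right hd this
      _ ≤ M := hstep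
  -- Mean value theorem along the arc
  have hhd : ∀ θ ∈ Icc (0:ℝ) β, HasDerivWithinAt (fun t => g (φ t))
      ((((r:ℂ) - r₀) * (Complex.exp (Complex.I * (θ:ℂ)) * Complex.I)) • deriv g (φ θ))
      (Icc (0:ℝ) β) θ := by
    intro θ hθ
    have hzsec : φ θ ∈ sector R₀ β₀ :=
      (key θ hθ).1 (Metric.mem_closedBall_self (mul_nonneg hδ.le (norm_nonneg _)))
    have hgz : DifferentiableAt ℂ g (φ θ) := hgd.differentiableAt (hU.mem_nhds (hsub hzsec))
    have he1 : HasDerivAt (fun w : ℂ => Complex.exp (Complex.I * w))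
        (Complex.exp (Complex.I * (θ:ℂ)) * Complex.I) (θ:ℂ) := by
      simpa using ((hasDerivAt_id (θ:ℂ)).const_mul Complex.I).cexp
    have he2 : HasDerivAt (fun t : ℝ => Complex.exp (Complex.I * (t:ℂ)))
        (Complex.exp (Complex.I * (θ:ℂ)) * Complex.I) θ := he1.comp_ofReal
    have hφd : HasDerivAt φ (((r:ℂ) - r₀) * (Complex.exp (Complex.I * (θ:ℂ)) * Complex.I)) θ := by
      rw [hφ_def]
      exact (he2.const_mul ((r:ℂ) - (r₀:ℂ))).const_add (r₀:ℂ)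
    exact (hgz.hasDerivAt.scomp θ hφd).hasDerivWithinAt
  have hbound : ∀ θ ∈ Icc (0:ℝ) β,
      ‖(((r:ℂ) - r₀) * (Complex.exp (Complex.I * (θ:ℂ)) * Complex.I)) • deriv g (φ θ)‖ ≤ M := by
    intro θ hθ
    have hc1 : ‖((r:ℂ) - r₀) * (Complex.exp (Complex.I * (θ:ℂ)) * Complex.I)‖ = r - r₀ := by
      rw [norm_mul, norm_mul]
      simp [Complex.norm_exp, ← Complex.ofReal_sub, Complex.norm_real,
        abs_of_nonneg (show (0:ℝ) ≤ r - r₀ by linarith)]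
    rw [norm_smul, hc1]
    calc (r - r₀) * ‖deriv g (φ θ)‖ = ‖deriv g (φ θ)‖ * (r - r₀) := by ring
      _ ≤ M := hderiv_bound θ hθ
  have hMVT := Convex.norm_image_sub_le_of_norm_hasDerivWithin_le hhd hbound
    (convex_Icc (0:ℝ) β) ⟨le_refl (0:ℝ), hβ0'⟩ ⟨hβ0', le_refl β⟩
  have hφ0 : φ 0 = (r : ℂ) := by rw [hφ_def]; simp
  have hφβ : φ β = (r₀ : ℂ) + ((r : ℂ) - (r₀ : ℂ)) * Complex.exp (Complex.I * (β : ℂ)) := by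
    rw [hφ_def]
  have hfin : ‖g ((r₀ : ℂ) + ((r : ℂ) - (r₀ : ℂ)) * Complex.exp (Complex.I * (β : ℂ)))
      - g (r : ℂ)‖ ≤ M * β := by
    have h := hMVT
    rw [hφ0, hφβ] at h
    simpa [abs_of_nonneg hβ0'] using h
  have hCV : 0 < C_V := lt_of_lt_of_le hc hcC
  have hgr := (hreal r (by linarith : R₀ ≤ r)).2
  have hgrpos : 0 < (g (r:ℂ)).re := lt_of_lt_of_le (by positivity) hgr
  have hM_le : M ≤ (C_V * ((1 - δ)/2) ^ (-γ) / (δ * c_V)) * (g (r:ℂ)).re := by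
    have hCpos : 0 < C_V * ((1 - δ)/2) ^ (-γ) / (δ * c_V) := by positivity
    have h2 := mul_le_mul_of_nonneg_left hgr hCpos.le
    have heq : C_V * ((1 - δ)/2) ^ (-γ) / (δ * c_V) * (c_V * r ^ (-γ))
        = (C_V / δ) * ((1 - δ)/2) ^ (-γ) * r ^ (-γ) := by
      field_simp
    rw [heq] at h2
    rw [hM_def]
    exact h2
  calc ‖g ((r₀ : ℂ) + ((r : ℂ) - (r₀ : ℂ)) * Complex.exp (Complex.I * (β : ℂ)))
        - g (r : ℂ)‖ ≤ M * β := hfin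
    _ ≤ ((C_V * ((1 - δ)/2) ^ (-γ) / (δ * c_V)) * (g (r:ℂ)).re) * β :=
        mul_le_mul_of_nonneg_right hM_le hβ0'
    _ = C_V * ((1 - δ)/2) ^ (-γ) / (δ * c_V) * β * (g (r:ℂ)).re := by ring
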